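/- Let P and Q be real-rooted and squarefree real polynomials. If {x ∈ ℝ | P(x) ≥ 0} = {x ∈ ℝ | Q(x) ≥ 0}, then there exists a real number λ > 0 such that Q = λ·P. -/

import Mathlib

/-- A real polynomial which is nonconstant, has all of its complex roots real,
and has no repeated roots. -/
def RealRootedSquarefree (P : Polynomial ℝ) : Prop :=
  0 < P.natDegree ∧ Squarefree P ∧ ∀ z : ℂ, Polynomial.aeval z P = 0 → z.im = 0

open Polynomial

lemma RealRootedSquarefree.ne_zero {P : Polynomial ℝ} (hP : RealRootedSquarefree P) : P ≠ 0 := by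
  intro h
  have := hP.1
  rw [h, Polynomial.natDegree_zero] at this
  exact absurd this (lt_irrefl 0)

lemma RealRootedSquarefree.sep {P : Polynomial ℝ} (hP : RealRootedSquarefree P) : P.Separable :=
  PerfectField.separable_iff_squarefree.mpr hP.2.1

lemma RealRootedSquarefree.card_roots {P : Polynomial ℝ} (hP : RealRootedSquarefree P) :
    P.roots.card = P.natDegree := by
  have hne : P ≠ 0 := hP.ne_zero
  set f : ℝ →+* ℂ := algebraMap ℝ ℂ with hf
  set Pc : Polynomial ℂ := P.map f with hPc
  have hPcne : Pc ≠ 0 := (Polynomial.map_ne_zero_iff (algebraMap ℝ ℂ).injective).mpr hne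
  have hsplits : Pc.Splits := IsAlgClosed.splits Pc
  have hcardc : Pc.roots.card = Pc.natDegree := (splits_iff_card_roots).mp hsplits
  have hdeg : Pc.natDegree = P.natDegree := natDegree_map f
  have hnodupc : Pc.roots.Nodup := nodup_roots (hP.sep.map)
  -- every root of Pc is real
  have him : ∀ z ∈ Pc.roots, z.im = 0 := by
    intro z hz
    have hz0 : Pc.eval z = 0 := (mem_roots hPcne).mp hz
    apply hP.2.2
    rw [aeval_def, ← eval_map]; exact hz0
  have hre : ∀ z ∈ Pc.roots, ((z.re : ℂ)) = z := by
    intro z hz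
    exact Complex.ext rfl (by simp [him z hz])
  -- real parts are distinct real roots of P
  have hsub : Pc.roots.toFinset.image Complex.re ⊆ P.roots.toFinset := by
    intro x hx
    simp only [Finset.mem_image, Multiset.mem_toFinset] at hx ⊢
    obtain ⟨z, hz, hzx⟩ := hx
    have hz0 : Pc.eval z = 0 := (mem_roots hPcne).mp hz
    have : Pc.eval ((x : ℂ)) = 0 := by rw [← hzx, hre z hz]; exact hz0
    have hx0 : P.eval x = 0 := by
      have : f (P.eval x) = 0 := by
        rw [← eval₂_at_apply, ← eval_map]; exact this
      exact (_root_.map_eq_zero f).mp this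
    exact (mem_roots hne).mpr hx0
  have hinj : Set.InjOn Complex.re (Pc.roots.toFinset : Set ℂ) := by
    intro z1 h1 z2 h2 hre12
    simp only [Finset.coe_sort_coe, Multiset.mem_toFinset, Finset.mem_coe] at h1 h2
    exact Complex.ext hre12 (by rw [him z1 h1, him z2 h2])
  have hcard1 : Pc.roots.toFinset.card = Pc.roots.card :=
    Multiset.toFinset_card_of_nodup hnodupc
  have hcard2 : (Pc.roots.toFinset.image Complex.re).card = Pc.roots.toFinset.card :=
    Finset.card_image_of_injOn hinj
  have hge : P.natDegree ≤ P.roots.card := by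
    calc P.natDegree = Pc.roots.toFinset.card := by rw [hcard1, hcardc, hdeg]
    _ = (Pc.roots.toFinset.image Complex.re).card := hcard2.symm
    _ ≤ P.roots.toFinset.card := Finset.card_le_card hsub
    _ ≤ P.roots.card := Multiset.toFinset_card_le _
  have hle : P.roots.card ≤ P.natDegree := by
    simpa using card_roots' P
  omega

lemma RealRootedSquarefree.splits {P : Polynomial ℝ} (hP : RealRootedSquarefree P) :
    P.Splits :=
  (splits_iff_card_roots).mpr hP.card_roots

/-- near a simple root, a squarefree polynomial takes both signs. -/
lemma RealRootedSquarefree.signs {P : Polynomial ℝ} (hP : RealRootedSquarefree P) {r : ℝ}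
    (hr : P.eval r = 0) {ε : ℝ} (hε : 0 < ε) :
    ∃ x y : ℝ, |x - r| < ε ∧ |y - r| < ε ∧ P.eval x < 0 ∧ 0 < P.eval y := by
  have hdvd : (X - C r) ∣ P := dvd_iff_isRoot.mpr hr
  obtain ⟨g, hg⟩ := hdvd
  have hgr : g.eval r ≠ 0 := by
    intro h0
    have : (X - C r) ∣ g := dvd_iff_isRoot.mpr h0
    obtain ⟨k, hk⟩ := this
    have hdvd2 : (X - C r) * (X - C r) ∣ P := ⟨k, by rw [hg, hk, mul_assoc]⟩
    exact not_isUnit_X_sub_C r (hP.2.1 _ hdvd2)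
  -- continuity of g
  have hcont : ContinuousAt (fun x => g.eval x) r := (Polynomial.continuous g).continuousAt
  have hev : ∀ᶠ x in nhds r, g.eval x ≠ 0 ∧ (0 < g.eval r → 0 < g.eval x) ∧
      (g.eval r < 0 → g.eval x < 0) := by
    rcases lt_or_gt_of_ne hgr with hneg | hpos
    · filter_upwards [hcont.eventually (eventually_lt_nhds hneg)] with x hx
      exact ⟨ne_of_lt hx, fun h => absurd h (not_lt.mpr hneg.le), fun _ => hx⟩
    · filter_upwards [hcont.eventually (eventually_gt_nhds hpos)] with x hx
      exact ⟨ne_of_gt hx, fun _ => hx, fun h => absurd h (not_lt.mpr hpos.le)⟩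
  obtain ⟨δ, hδ, hball⟩ := Metric.eventually_nhds_iff_ball.mp hev
  set t : ℝ := min δ ε / 2 with ht
  have ht0 : 0 < t := by positivity
  have htδ : t < δ := by
    have := min_le_left δ ε; simp only [ht]; linarith
  have htε : t < ε := by
    have := min_le_right δ ε; simp only [ht]; linarith
  have hmem : ∀ s : ℝ, |s| ≤ t → (r + s) ∈ Metric.ball r δ := by
    intro s hs
    simp only [Metric.mem_ball, Real.dist_eq, add_sub_cancel_left]
    exact lt_of_le_of_lt hs htδ
  have habs : ∀ s : ℝ, |s| ≤ t → |(r + s) - r| < ε := by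
    intro s hs; simpa using lt_of_le_of_lt hs htε
  have hevalsign : ∀ s : ℝ, P.eval (r + s) = s * g.eval (r + s) := by
    intro s; rw [hg]; simp
  rcases lt_or_gt_of_ne hgr with hneg | hpos
  · -- g < 0 near r : P(r+t) < 0, P(r-t) > 0
    refine ⟨r + t, r + (-t), habs t (by rw [abs_of_pos ht0]), habs (-t) (by rw [abs_neg, abs_of_pos ht0]), ?_, ?_⟩
    · rw [hevalsign]
      exact mul_neg_of_pos_of_neg ht0 ((hball _ (hmem t (le_of_eq (abs_of_pos ht0)))).2.2 hneg)
    · rw [hevalsign]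
      exact mul_pos_of_neg_of_neg (neg_neg_iff_pos.mpr ht0)
        ((hball _ (hmem (-t) (by rw [abs_neg, abs_of_pos ht0]))).2.2 hneg)
  · refine ⟨r + (-t), r + t, habs (-t) (by rw [abs_neg, abs_of_pos ht0]), habs t (by rw [abs_of_pos ht0]), ?_, ?_⟩
    · rw [hevalsign]
      exact mul_neg_of_neg_of_pos (neg_neg_iff_pos.mpr ht0)
        ((hball _ (hmem (-t) (by rw [abs_neg, abs_of_pos ht0]))).2.1 hpos)
    · rw [hevalsign]
      exact mul_pos ht0 ((hball _ (hmem t (le_of_eq (abs_of_pos ht0)))).2.1 hpos)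

lemma RealRootedSquarefree.root_subset {P Q : Polynomial ℝ} (hP : RealRootedSquarefree P)
    (h : {x : ℝ | 0 ≤ P.eval x} = {x : ℝ | 0 ≤ Q.eval x}) :
    ∀ r : ℝ, P.eval r = 0 → Q.eval r = 0 := by
  intro r hr
  have hr0 : 0 ≤ Q.eval r := by
    have : r ∈ {x : ℝ | 0 ≤ P.eval x} := by simp [hr]
    rw [h] at this; exact this
  rcases hr0.eq_or_lt with heq | hlt
  · exact heq.symm
  exfalso
  have hcont : ContinuousAt (fun x => Q.eval x) r := (Polynomial.continuous Q).continuousAt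
  have hev : ∀ᶠ x in nhds r, 0 < Q.eval x := hcont.eventually (eventually_gt_nhds hlt)
  obtain ⟨δ, hδ, hball⟩ := Metric.eventually_nhds_iff_ball.mp hev
  obtain ⟨x, _, hx, _, hxneg, _⟩ := hP.signs hr hδ
  have : 0 ≤ P.eval x := by
    have h1 : 0 < Q.eval x := hball x (by simpa [Metric.mem_ball, Real.dist_eq] using hx)
    have : x ∈ {x : ℝ | 0 ≤ Q.eval x} := le_of_lt h1
    rw [← h] at this; exact this
  linarith

/-- If two real-rooted squarefree real polynomials have the same nonnegativity set,
then they differ by a positive constant factor. -/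
theorem eq_pos_smul_of_nonneg_set_eq (P Q : Polynomial ℝ)
    (hP : RealRootedSquarefree P) (hQ : RealRootedSquarefree Q)
    (h : {x : ℝ | 0 ≤ P.eval x} = {x : ℝ | 0 ≤ Q.eval x}) :
    ∃ l : ℝ, 0 < l ∧ Q = Polynomial.C l * P := by
  have hPne : P ≠ 0 := hP.ne_zero
  have hQne : Q ≠ 0 := hQ.ne_zero
  have hroots : P.roots = Q.roots := by
    rw [Multiset.Nodup.ext (nodup_roots hP.sep) (nodup_roots hQ.sep)]
    intro a
    simp only [mem_roots hPne, mem_roots hQne]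
    constructor
    · exact fun ha => RealRootedSquarefree.root_subset hP h a ha
    · exact fun ha => RealRootedSquarefree.root_subset hQ h.symm a ha
  have hPfac := Splits.eq_prod_roots hP.splits
  have hQfac := Splits.eq_prod_roots hQ.splits
  rw [← hroots] at hQfac
  have ha : P.leadingCoeff ≠ 0 := leadingCoeff_ne_zero.mpr hPne
  have hb : Q.leadingCoeff ≠ 0 := leadingCoeff_ne_zero.mpr hQne
  set l : ℝ := Q.leadingCoeff / P.leadingCoeff with hl
  have hQl : Q = C l * P := by
    rw [hPfac, hQfac, ← mul_assoc, ← C_mul, hl, div_mul_cancel₀ _ ha]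
  refine ⟨l, ?_, hQl⟩
  have hlne : l ≠ 0 := div_ne_zero hb ha
  -- find a point where P > 0
  have hrootsne : P.roots ≠ 0 := by
    intro h0
    have := hP.card_roots
    rw [h0] at this
    simp only [Multiset.card_zero] at this
    exact absurd hP.1 (by omega)
  obtain ⟨r, hrmem⟩ := Multiset.exists_mem_of_ne_zero hrootsne
  have hr : P.eval r = 0 := (mem_roots hPne).mp hrmem
  obtain ⟨_, y, _, _, _, hy⟩ := hP.signs hr one_pos
  have hQy : 0 ≤ Q.eval y := by
    have : y ∈ {x : ℝ | 0 ≤ P.eval x} := le_of_lt hy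
    rw [h] at this; exact this
  rw [hQl] at hQy
  simp only [eval_mul, eval_C] at hQy
  rcases hlne.lt_or_gt with hneg | hpos
  · exfalso; nlinarith
  · exact hpos
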